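/- arXiv:1811.02933 — 3 statements merged into one kernel-verified Lean document; each statement's English description precedes it below -/
import Mathlib

section
/- For any probability vector (p_1,...,p_n) with p_k ≥ 0 and p_1+...+p_n = 1, the inequality ∑_{k=1}^n (1-p_k)·log(1-p_k) ≥ ∑_{k=1}^n p_k·log(p_1+...+p_k) + ∑_{k=1}^n p_k·log(p_k+...+p_n) holds, where terms of the form x·log(x) are interpreted as 0 when x = 0. -/
open Real Finset

private lemma key_aux (a b : ℝ) (ha : 0 ≤ a) (hb : 0 ≤ b) (hab : a + b ≤ 1) :
    a * Real.log a ≤ a * Real.log (a + b) + a * Real.log (1 - b) := by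
  rcases ha.eq_or_lt with h | h
  · simp [← h]
  · have hprod : a ≤ (a + b) * (1 - b) := by nlinarith
    have hpos : (0:ℝ) < a + b := by linarith
    have hpos2 : (0:ℝ) < 1 - b := by linarith
    have h2 : Real.log a ≤ Real.log ((a + b) * (1 - b)) := Real.log_le_log h hprod
    rw [Real.log_mul (ne_of_gt hpos) (ne_of_gt hpos2)] at h2
    nlinarith [mul_le_mul_of_nonneg_left h2 h.le]

private lemma key (y q : ℝ) (hy : 0 ≤ y) (hq : 0 ≤ q) (h1 : y + q ≤ 1) :
    q * Real.log (y + q) + q * Real.log (1 - y) +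
      (((1 - (y + q)) * Real.log (1 - (y + q)) - (y + q) * Real.log (y + q)) -
        ((1 - y) * Real.log (1 - y) - y * Real.log y)) ≤
      (1 - q) * Real.log (1 - q) := by
  have h1' : 0 ≤ 1 - y - q := by linarith
  have A := key_aux y (1 - y - q) hy h1' (by linarith)
  have B := key_aux (1 - y - q) y h1' hy (by linarith)
  rw [show y + (1 - y - q) = 1 - q from by ring] at A
  rw [show 1 - (1 - y - q) = y + q from by ring] at A
  rw [show (1 - y - q) + y = 1 - q from by ring] at B
  rw [show (1:ℝ) - (y + q) = 1 - y - q from by ring]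
  linarith [A, B]

private def Qf (n : ℕ) (p : Fin n → ℝ) (m : ℕ) : ℝ :=
  ∑ j ∈ Finset.univ.filter (fun j : Fin n => (j : ℕ) < m), p j

private noncomputable def Ff (t : ℝ) : ℝ := (1 - t) * Real.log (1 - t) - t * Real.log t

theorem stmt_0 (n : ℕ) (p : Fin n → ℝ) (hp : ∀ k, 0 ≤ p k)
    (hsum : ∑ k, p k = 1) :
    ∑ k, (1 - p k) * Real.log (1 - p k) ≥
      (∑ k, p k * Real.log (∑ j ∈ Finset.univ.filter (· ≤ k), p j)) +
      (∑ k, p k * Real.log (∑ j ∈ Finset.univ.filter (k ≤ ·), p j)) := by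
  classical
  have hQ0 : Qf n p 0 = 0 := by simp [Qf]
  have hQn : Qf n p n = 1 := by
    rw [Qf, Finset.filter_true_of_mem (fun j _ => j.isLt)]
    exact hsum
  have hQnonneg : ∀ m, 0 ≤ Qf n p m := fun m =>
    Finset.sum_nonneg fun j _ => hp j
  have hQle1 : ∀ m, Qf n p m ≤ 1 := by
    intro m
    rw [← hsum]
    exact Finset.sum_le_sum_of_subset_of_nonneg (Finset.filter_subset _ _)
      (fun j _ _ => hp j)
  have h1 : ∀ m : ℕ, Qf n p m = ∑ j : Fin n, if (j : ℕ) < m then p j else 0 := by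
    intro m; rw [Qf]; exact Finset.sum_filter _ _
  have hQsucc : ∀ k : Fin n, Qf n p ((k : ℕ) + 1) = Qf n p k + p k := by
    intro k
    rw [h1, h1, ← sub_eq_iff_eq_add', ← Finset.sum_sub_distrib]
    have hterm : ∀ j : Fin n, ((if (j : ℕ) < (k : ℕ) + 1 then p j else 0) -
        (if (j : ℕ) < (k : ℕ) then p j else 0)) = if j = k then p j else 0 := by
      intro j
      by_cases hjk : j = k
      · subst hjk; simp
      · have hne : (j : ℕ) ≠ (k : ℕ) := by simpa [Fin.ext_iff] using hjk
        have hiff : ((j : ℕ) < (k : ℕ) + 1) ↔ ((j : ℕ) < (k : ℕ)) := by omega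
        simp [hjk, hiff]
    rw [Finset.sum_congr rfl (fun j _ => hterm j)]
    simp
  have hpre : ∀ k : Fin n,
      (∑ j ∈ Finset.univ.filter (· ≤ k), p j) = Qf n p ((k : ℕ) + 1) := by
    intro k
    rw [Qf]
    refine Finset.sum_congr ?_ fun _ _ => rfl
    ext j
    simp only [Finset.mem_filter, Finset.mem_univ, true_and, Fin.le_def, Nat.lt_succ_iff]
  have hsuf : ∀ k : Fin n,
      (∑ j ∈ Finset.univ.filter (k ≤ ·), p j) = 1 - Qf n p k := by
    intro k
    have h := Finset.sum_filter_add_sum_filter_not Finset.univ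
      (fun j : Fin n => (j : ℕ) < (k : ℕ)) p
    rw [hsum] at h
    have heq : Finset.univ.filter (fun j : Fin n => ¬ (j : ℕ) < (k : ℕ)) =
        Finset.univ.filter (k ≤ ·) := by
      ext j
      simp only [Finset.mem_filter, Finset.mem_univ, true_and, not_lt, Fin.le_def]
    rw [heq] at h
    rw [Qf]
    linarith [h]
  have tel : ∑ k : Fin n, (Ff (Qf n p ((k : ℕ) + 1)) - Ff (Qf n p (k : ℕ))) = 0 := by
    rw [Fin.sum_univ_eq_sum_range (fun m => Ff (Qf n p (m + 1)) - Ff (Qf n p m))]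
    rw [Finset.sum_range_sub (fun m => Ff (Qf n p m))]
    rw [hQ0, hQn]
    norm_num [Ff]
  rw [ge_iff_le]
  have hrw : (∑ k, p k * Real.log (∑ j ∈ Finset.univ.filter (· ≤ k), p j)) +
      (∑ k, p k * Real.log (∑ j ∈ Finset.univ.filter (k ≤ ·), p j)) =
      ∑ k : Fin n, (p k * Real.log (Qf n p ((k : ℕ) + 1)) + p k * Real.log (1 - Qf n p k) +
        (Ff (Qf n p ((k : ℕ) + 1)) - Ff (Qf n p (k : ℕ)))) := by
    rw [Finset.sum_add_distrib, Finset.sum_add_distrib, tel, add_zero]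
    congr 1
    · exact Finset.sum_congr rfl fun k _ => by rw [hpre k]
    · exact Finset.sum_congr rfl fun k _ => by rw [hsuf k]
  rw [hrw]
  apply Finset.sum_le_sum
  intro k _
  have hsum1 : Qf n p (k : ℕ) + p k ≤ 1 := by
    rw [← hQsucc k]; exact hQle1 _
  have hk := key (Qf n p (k : ℕ)) (p k) (hQnonneg _) (hp k) hsum1
  rw [hQsucc k]
  simpa [Ff] using hk
end

section
/- Let γ = (√17 - 3)/2. Suppose (q,r,s,t) ∈ Δ_4 with r + s ≤ γ. Then φ(q,r,s,t) ≤ φ(q, r+s, t), where φ(p) = ∑_k p_k·log(prefix sum up to k) + ∑_k p_k·log(suffix sum from k) - 2∑_k (1-p_k)·log(1-p_k). -/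
set_option maxHeartbeats 1000000
set_option maxRecDepth 4000

open Finset

noncomputable def phi {n : ℕ} (p : Fin n → ℝ) : ℝ :=
  (∑ k, p k * Real.log (∑ j ∈ Finset.univ.filter (· ≤ k), p j)) +
  (∑ k, p k * Real.log (∑ j ∈ Finset.univ.filter (k ≤ ·), p j)) -
  2 * ∑ k, (1 - p k) * Real.log (1 - p k)

private lemma log_pade_low {x : ℝ} (hx : 1 ≤ x) :
    (3*x^2-3)/(x^2+4*x+1) ≤ Real.log x := by
  have mono : MonotoneOn (fun y : ℝ => Real.log y - (3*y^2-3)/(y^2+4*y+1)) (Set.Ici 1) := by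
    have hden : ∀ y : ℝ, y ∈ Set.Ici (1:ℝ) → y^2+4*y+1 ≠ 0 := by
      intro y hy; simp only [Set.mem_Ici] at hy; nlinarith
    have hder : ∀ y : ℝ, 1 ≤ y → HasDerivAt (fun y : ℝ => Real.log y - (3*y^2-3)/(y^2+4*y+1))
        (y⁻¹ - ((3*(2*y))*(y^2+4*y+1) - (3*y^2-3)*(2*y+4))/(y^2+4*y+1)^2) y := by
      intro y hy
      have h0 : y ≠ 0 := by linarith
      have hnum : HasDerivAt (fun y : ℝ => 3*y^2-3) (3*(2*y)) y := by
        simpa using (((hasDerivAt_pow 2 y).const_mul 3).sub_const 3)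
      have hden' : HasDerivAt (fun y : ℝ => y^2+4*y+1) (2*y+4) y := by
        have := ((hasDerivAt_pow 2 y).add ((hasDerivAt_id y).const_mul 4)).add_const 1
        simpa using this
      exact (Real.hasDerivAt_log h0).sub (hnum.div hden' (hden y (by simpa using hy)))
    apply monotoneOn_of_deriv_nonneg (convex_Ici 1)
    · apply ContinuousOn.sub
      · exact Real.continuousOn_log.mono (by intro y hy; simp only [Set.mem_Ici] at hy; simp; intro h; simp [h] at hy; linarith)
      · exact ContinuousOn.div (by fun_prop) (by fun_prop) hden
    · intro y hy
      rw [interior_Ici] at hy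
      exact ((hder y (le_of_lt hy)).differentiableAt).differentiableWithinAt
    · intro y hy
      rw [interior_Ici, Set.mem_Ioi] at hy
      rw [(hder y hy.le).deriv]
      have h1 : (0:ℝ) < y := by linarith
      have h2 : (0:ℝ) < y^2+4*y+1 := by nlinarith
      have key : y⁻¹ - ((3*(2*y))*(y^2+4*y+1) - (3*y^2-3)*(2*y+4))/(y^2+4*y+1)^2
          = (y-1)^4/(y*(y^2+4*y+1)^2) := by
        field_simp
        ring
      rw [key]; positivity
  have h := mono (Set.self_mem_Ici) (Set.mem_Ici.mpr hx) hx
  simp only [Real.log_one] at h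
  have h2 : ((3:ℝ)*1^2-3)/(1^2+4*1+1) = 0 := by norm_num
  simp only [h2] at h
  linarith

private lemma log_pade_up4 {x : ℝ} (hx : 1 ≤ x) :
    Real.log x ≤ (x^2+4*x-5)/(4*x+2) := by
  have mono : MonotoneOn (fun y : ℝ => (y^2+4*y-5)/(4*y+2) - Real.log y) (Set.Ici 1) := by
    have hden : ∀ y : ℝ, y ∈ Set.Ici (1:ℝ) → 4*y+2 ≠ 0 := by
      intro y hy; simp only [Set.mem_Ici] at hy; nlinarith
    have hder : ∀ y : ℝ, 1 ≤ y → HasDerivAt (fun y : ℝ => (y^2+4*y-5)/(4*y+2) - Real.log y)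
        (((2*y+4)*(4*y+2) - (y^2+4*y-5)*4)/(4*y+2)^2 - y⁻¹) y := by
      intro y hy
      have h0 : y ≠ 0 := by linarith
      have hnum : HasDerivAt (fun y : ℝ => y^2+4*y-5) (2*y+4) y := by
        have := ((hasDerivAt_pow 2 y).add ((hasDerivAt_id y).const_mul 4)).sub_const 5
        simpa using this
      have hden' : HasDerivAt (fun y : ℝ => 4*y+2) 4 y := by
        have := ((hasDerivAt_id y).const_mul 4).add_const 2
        simpa using this
      exact (hnum.div hden' (hden y (by simpa using hy))).sub (Real.hasDerivAt_log h0)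
    apply monotoneOn_of_deriv_nonneg (convex_Ici 1)
    · apply ContinuousOn.sub
      · exact ContinuousOn.div (by fun_prop) (by fun_prop) hden
      · exact Real.continuousOn_log.mono (by intro y hy; simp only [Set.mem_Ici] at hy; simp; intro h; simp [h] at hy; linarith)
    · intro y hy
      rw [interior_Ici] at hy
      exact ((hder y (le_of_lt hy)).differentiableAt).differentiableWithinAt
    · intro y hy
      rw [interior_Ici, Set.mem_Ioi] at hy
      rw [(hder y hy.le).deriv]
      have h1 : (0:ℝ) < y := by linarith
      have h2 : (0:ℝ) < 4*y+2 := by nlinarith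
      have key : ((2*y+4)*(4*y+2) - (y^2+4*y-5)*4)/(4*y+2)^2 - y⁻¹
          = 4*(y-1)^3/(y*(4*y+2)^2) := by
        field_simp
        ring
      rw [key]
      exact div_nonneg (by nlinarith [pow_nonneg (by linarith : (0:ℝ) ≤ y-1) 3]) (by positivity)
  have h := mono (Set.self_mem_Ici) (Set.mem_Ici.mpr hx) hx
  simp only [Real.log_one] at h
  have h2 : ((1:ℝ)^2+4*1-5)/(4*1+2) = 0 := by norm_num
  simp only [h2] at h
  linarith

private lemma log_pade_up2 {x : ℝ} (hx : 1 ≤ x) :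
    Real.log x ≤ (x^2-1)/(2*x) := by
  have mono : MonotoneOn (fun y : ℝ => (y^2-1)/(2*y) - Real.log y) (Set.Ici 1) := by
    have hden : ∀ y : ℝ, y ∈ Set.Ici (1:ℝ) → 2*y ≠ 0 := by
      intro y hy; simp only [Set.mem_Ici] at hy; nlinarith
    have hder : ∀ y : ℝ, 1 ≤ y → HasDerivAt (fun y : ℝ => (y^2-1)/(2*y) - Real.log y)
        (((2*y)*(2*y) - (y^2-1)*2)/(2*y)^2 - y⁻¹) y := by
      intro y hy
      have h0 : y ≠ 0 := by linarith
      have hnum : HasDerivAt (fun y : ℝ => y^2-1) (2*y) y := by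
        have := (hasDerivAt_pow 2 y).sub_const 1
        simpa using this
      have hden' : HasDerivAt (fun y : ℝ => 2*y) 2 y := by
        simpa using ((hasDerivAt_id y).const_mul 2)
      exact (hnum.div hden' (hden y (by simpa using hy))).sub (Real.hasDerivAt_log h0)
    apply monotoneOn_of_deriv_nonneg (convex_Ici 1)
    · apply ContinuousOn.sub
      · exact ContinuousOn.div (by fun_prop) (by fun_prop) hden
      · exact Real.continuousOn_log.mono (by intro y hy; simp only [Set.mem_Ici] at hy; simp; intro h; simp [h] at hy; linarith)
    · intro y hy
      rw [interior_Ici] at hy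
      exact ((hder y (le_of_lt hy)).differentiableAt).differentiableWithinAt
    · intro y hy
      rw [interior_Ici, Set.mem_Ioi] at hy
      rw [(hder y hy.le).deriv]
      have h1 : (0:ℝ) < y := by linarith
      have key : ((2*y)*(2*y) - (y^2-1)*2)/(2*y)^2 - y⁻¹
          = (y-1)^2/(2*y^2) := by
        field_simp
        ring
      rw [key]; positivity
  have h := mono (Set.self_mem_Ici) (Set.mem_Ici.mpr hx) hx
  simp only [Real.log_one] at h
  have h2 : ((1:ℝ)^2-1)/(2*1) = 0 := by norm_num
  simp only [h2] at h
  linarith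

/-- two-variable Padé-[2/2] lower bound -/
private lemma log_sub_log_ge3 (a b : ℝ) (hb : 0 < b) (hab : b ≤ a) :
    (3*a^2-3*b^2)/(a^2+4*a*b+b^2) ≤ Real.log a - Real.log b := by
  have ha : 0 < a := lt_of_lt_of_le hb hab
  have hx : 1 ≤ a/b := (one_le_div hb).mpr hab
  have h := log_pade_low hx
  rw [Real.log_div (ne_of_gt ha) (ne_of_gt hb)] at h
  have e : (3*(a/b)^2-3)/((a/b)^2+4*(a/b)+1) = (3*a^2-3*b^2)/(a^2+4*a*b+b^2) := by
    rw [div_eq_div_iff]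
    · field_simp
    · have : 0 < (a/b)^2+4*(a/b)+1 := by positivity
      linarith
    · nlinarith
  linarith [e ▸ h]

/-- two-variable [1/1] lower bound -/
private lemma log_sub_log_ge1 (a b : ℝ) (hb : 0 < b) (hab : b ≤ a) :
    (2*a-2*b)/(a+b) ≤ Real.log a - Real.log b := by
  have h := log_sub_log_ge3 a b hb hab
  have ha : 0 < a := lt_of_lt_of_le hb hab
  have e : (2*a-2*b)/(a+b) ≤ (3*a^2-3*b^2)/(a^2+4*a*b+b^2) := by
    rw [div_le_div_iff₀ (by linarith) (by nlinarith)]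
    nlinarith [pow_nonneg (by linarith : (0:ℝ) ≤ a - b) 3]
  linarith

/-- two-variable [2/2]-type upper bound -/
private lemma log_sub_log_le4 (a b : ℝ) (hb : 0 < b) (hab : b ≤ a) :
    Real.log a - Real.log b ≤ (a^2+4*a*b-5*b^2)/(4*a*b+2*b^2) := by
  have ha : 0 < a := lt_of_lt_of_le hb hab
  have hx : 1 ≤ a/b := (one_le_div hb).mpr hab
  have h := log_pade_up4 hx
  rw [Real.log_div (ne_of_gt ha) (ne_of_gt hb)] at h
  have e : ((a/b)^2+4*(a/b)-5)/(4*(a/b)+2) = (a^2+4*a*b-5*b^2)/(4*a*b+2*b^2) := by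
    rw [div_eq_div_iff]
    · field_simp
    · nlinarith
    · nlinarith
  linarith [e ▸ h]

/-- two-variable trapezoid upper bound -/
private lemma log_sub_log_le2 (a b : ℝ) (hb : 0 < b) (hab : b ≤ a) :
    Real.log a - Real.log b ≤ (a^2-b^2)/(2*a*b) := by
  have ha : 0 < a := lt_of_lt_of_le hb hab
  have hx : 1 ≤ a/b := (one_le_div hb).mpr hab
  have h := log_pade_up2 hx
  rw [Real.log_div (ne_of_gt ha) (ne_of_gt hb)] at h
  have e : ((a/b)^2-1)/(2*(a/b)) = (a^2-b^2)/(2*a*b) := by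
    rw [div_eq_div_iff]
    · field_simp
    · positivity
    · positivity
  linarith [e ▸ h]

private theorem Nnn (r s : ℝ) (hr : 0 ≤ r) (hrs : r ≤ s) (hw : (r+s)^2 + 3*(r+s) ≤ 2) :
    0 ≤ 72*s - 312*s^2 + 486*s^3 - 324*s^4 + 78*s^5
      - 240*r*s + 744*r*s^2 - 744*r*s^3 + 234*r*s^4 + 6*r*s^5
      - 12*r^2 + 292*r^2*s - 546*r^2*s^2 + 239*r^2*s^3 + 24*r^2*s^4
      + 16*r^3 - 129*r^3*s + 83*r^3*s^2 + 37*r^3*s^3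
      - 3*r^4 - 5*r^4*s + 27*r^4*s^2
      - 5*r^5 + 9*r^5*s + r^6 := by
  set u : ℝ := r + s with hu
  have hu0 : 0 ≤ u := by simp [hu]; linarith
  have hru : 2*r ≤ u := by simp [hu]; linarith
  have hC0 : 0 ≤ 13*u^4 - 54*u^3 + 81*u^2 - 52*u + 12 := by
    nlinarith [sq_nonneg (u^2 - 2*u + 1), sq_nonneg (u - 1/2), sq_nonneg u, mul_nonneg hu0 hu0, sq_nonneg (u^2 - 3*u + 1), mul_nonneg (mul_nonneg hu0 hu0) hu0, sq_nonneg (13*u^2 - 20*u)]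
  have hE : 0 ≤ 288 - 1128*u + 1538*u^2 - 873*u^3 + 156*u^4 + 13*u^5 := by
    nlinarith [sq_nonneg (u - 1/2), sq_nonneg u, mul_nonneg hu0 hu0, mul_nonneg (mul_nonneg hu0 hu0) hu0, sq_nonneg (u^2 - 3*u)]
  have hC2 : 0 ≤ 84 - 262*u + 258*u^2 - 83*u^3 + 6*u^4 := by
    nlinarith [sq_nonneg (u - 1/2), mul_nonneg hu0 hu0, mul_nonneg (mul_nonneg hu0 hu0) hu0]
  have hC3 : 0 ≤ 18 - 27*u + 10*u^2 - u^3 := by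
    nlinarith [mul_nonneg hu0 hu0, mul_nonneg (mul_nonneg hu0 hu0) hu0]
  have hNval : 72*s - 312*s^2 + 486*s^3 - 324*s^4 + 78*s^5
      - 240*r*s + 744*r*s^2 - 744*r*s^3 + 234*r*s^4 + 6*r*s^5
      - 12*r^2 + 292*r^2*s - 546*r^2*s^2 + 239*r^2*s^3 + 24*r^2*s^4
      + 16*r^3 - 129*r^3*s + 83*r^3*s^2 + 37*r^3*s^3
      - 3*r^4 - 5*r^4*s + 27*r^4*s^2
      - 5*r^5 + 9*r^5*s + r^6
      = (6*u*(13*u^4 - 54*u^3 + 81*u^2 - 52*u + 12))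
        + (-6)*(12 - 64*u + 119*u^2 - 92*u^3 + 26*u^4 - u^5)*r
        + (-(84 - 262*u + 258*u^2 - 83*u^3 + 6*u^4))*r^2
        + (-(18 - 27*u + 10*u^2 - u^3))*r^3 := by
    simp only [hu]; ring
  rw [hNval]
  rcases eq_or_lt_of_le hu0 with h0 | hupos
  · have hr0 : r = 0 := by nlinarith
    rw [hr0, ← h0]; norm_num
  have key : 0 ≤ 8*u*((6*u*(13*u^4 - 54*u^3 + 81*u^2 - 52*u + 12))
        + (-6)*(12 - 64*u + 119*u^2 - 92*u^3 + 26*u^4 - u^5)*r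
        + (-(84 - 262*u + 258*u^2 - 83*u^3 + 6*u^4))*r^2
        + (-(18 - 27*u + 10*u^2 - u^3))*r^3) := by
    have i1 : (0:ℝ) ≤ 8*(u-2*r)*(6*u*(13*u^4 - 54*u^3 + 81*u^2 - 52*u + 12)) := by
      have : (0:ℝ) ≤ u - 2*r := by linarith
      positivity
    have i2 : (0:ℝ) ≤ 2*r*(288*u - 1128*u^2 + 1538*u^3 - 873*u^4 + 156*u^5 + 13*u^6) := by
      have : (0:ℝ) ≤ 288*u - 1128*u^2 + 1538*u^3 - 873*u^4 + 156*u^5 + 13*u^6 := by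
        nlinarith [mul_nonneg hu0 hE]
      positivity
    have i3 : (0:ℝ) ≤ 4*u*r*(u-2*r)*(84 - 262*u + 258*u^2 - 83*u^3 + 6*u^4) := by
      have h1 : (0:ℝ) ≤ u - 2*r := by linarith
      positivity
    have i4 : (0:ℝ) ≤ 2*u*r*(u-2*r)*(2*r+u)*(18 - 27*u + 10*u^2 - u^3) := by
      have h1 : (0:ℝ) ≤ u - 2*r := by linarith
      have h2 : (0:ℝ) ≤ 2*r + u := by linarith
      positivity
    linarith [i1, i2, i3, i4]
  have h8 : (0:ℝ) < 8*u := by linarith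
  exact nonneg_of_mul_nonneg_right (by linarith [key]) h8

private lemma phi4_eval (a b c d : ℝ) : phi ![a,b,c,d] =
    (a * Real.log a + b * Real.log (a+b) + c * Real.log (a+b+c) + d * Real.log (a+b+c+d))
  + (a * Real.log (a+b+c+d) + b * Real.log (b+c+d) + c * Real.log (c+d) + d * Real.log d)
  - 2 * ((1-a) * Real.log (1-a) + (1-b) * Real.log (1-b) + (1-c) * Real.log (1-c) + (1-d) * Real.log (1-d)) := by
  have e0 : (Finset.univ.filter (· ≤ (0:Fin 4))) = {0} := by decide
  have e1 : (Finset.univ.filter (· ≤ (1:Fin 4))) = {0,1} := by decide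
  have e2 : (Finset.univ.filter (· ≤ (2:Fin 4))) = {0,1,2} := by decide
  have e3 : (Finset.univ.filter (· ≤ (3:Fin 4))) = {0,1,2,3} := by decide
  have f0 : (Finset.univ.filter ((0:Fin 4) ≤ ·)) = {0,1,2,3} := by decide
  have f1 : (Finset.univ.filter ((1:Fin 4) ≤ ·)) = {1,2,3} := by decide
  have f2 : (Finset.univ.filter ((2:Fin 4) ≤ ·)) = {2,3} := by decide
  have f3 : (Finset.univ.filter ((3:Fin 4) ≤ ·)) = {3} := by decide
  have g1 : ∑ j ∈ ({0,1,2,3} : Finset (Fin 4)), ![a,b,c,d] j = a+b+c+d := by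
    rw [Finset.sum_insert (by decide), Finset.sum_insert (by decide),
        Finset.sum_insert (by decide), Finset.sum_singleton]
    norm_num [Fin.isValue, Matrix.cons_val_two, Matrix.cons_val_three, Matrix.tail_cons]
    try ring
  have g2 : ∑ j ∈ ({0,1,2} : Finset (Fin 4)), ![a,b,c,d] j = a+b+c := by
    rw [Finset.sum_insert (by decide), Finset.sum_insert (by decide), Finset.sum_singleton]
    norm_num [Fin.isValue, Matrix.cons_val_two, Matrix.cons_val_three, Matrix.tail_cons]
    try ring
  have g3 : ∑ j ∈ ({1,2,3} : Finset (Fin 4)), ![a,b,c,d] j = b+c+d := by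
    rw [Finset.sum_insert (by decide), Finset.sum_insert (by decide), Finset.sum_singleton]
    norm_num [Fin.isValue, Matrix.cons_val_two, Matrix.cons_val_three, Matrix.tail_cons]
    try ring
  have g4 : ∑ j ∈ ({2,3} : Finset (Fin 4)), ![a,b,c,d] j = c+d := by
    rw [Finset.sum_insert (by decide), Finset.sum_singleton]
    norm_num [Fin.isValue, Matrix.cons_val_two, Matrix.cons_val_three, Matrix.tail_cons]
    try ring
  have g5 : ∑ j ∈ ({0,1} : Finset (Fin 4)), ![a,b,c,d] j = a+b := by
    rw [Finset.sum_insert (by decide), Finset.sum_singleton]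
    norm_num [Fin.isValue, Matrix.cons_val_two, Matrix.cons_val_three, Matrix.tail_cons]
    try ring
  simp only [phi, Fin.sum_univ_four, e0, e1, e2, e3, f0, f1, f2, f3, g1, g2, g3, g4, g5,
    Finset.sum_singleton]
  norm_num [Fin.isValue, Matrix.cons_val_two, Matrix.cons_val_three, Matrix.tail_cons]
  try ring

private lemma phi3_eval (a b c : ℝ) : phi ![a,b,c] =
    (a * Real.log a + b * Real.log (a+b) + c * Real.log (a+b+c))
  + (a * Real.log (a+b+c) + b * Real.log (b+c) + c * Real.log c)
  - 2 * ((1-a) * Real.log (1-a) + (1-b) * Real.log (1-b) + (1-c) * Real.log (1-c)) := by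
  have e0 : (Finset.univ.filter (· ≤ (0:Fin 3))) = {0} := by decide
  have e1 : (Finset.univ.filter (· ≤ (1:Fin 3))) = {0,1} := by decide
  have e2 : (Finset.univ.filter (· ≤ (2:Fin 3))) = {0,1,2} := by decide
  have f0 : (Finset.univ.filter ((0:Fin 3) ≤ ·)) = {0,1,2} := by decide
  have f1 : (Finset.univ.filter ((1:Fin 3) ≤ ·)) = {1,2} := by decide
  have f2 : (Finset.univ.filter ((2:Fin 3) ≤ ·)) = {2} := by decide
  have g1 : ∑ j ∈ ({0,1,2} : Finset (Fin 3)), ![a,b,c] j = a+b+c := by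
    rw [Finset.sum_insert (by decide), Finset.sum_insert (by decide), Finset.sum_singleton]
    norm_num [Fin.isValue, Matrix.cons_val_two, Matrix.cons_val_three, Matrix.tail_cons]
    try ring
  have g2 : ∑ j ∈ ({1,2} : Finset (Fin 3)), ![a,b,c] j = b+c := by
    rw [Finset.sum_insert (by decide), Finset.sum_singleton]
    norm_num [Fin.isValue, Matrix.cons_val_two, Matrix.cons_val_three, Matrix.tail_cons]
    try ring
  have g3 : ∑ j ∈ ({0,1} : Finset (Fin 3)), ![a,b,c] j = a+b := by
    rw [Finset.sum_insert (by decide), Finset.sum_singleton]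
    norm_num [Fin.isValue, Matrix.cons_val_two, Matrix.cons_val_three, Matrix.tail_cons]
    try ring
  simp only [phi, Fin.sum_univ_three, e0, e1, e2, f0, f1, f2, g1, g2, g3, Finset.sum_singleton]
  norm_num [Fin.isValue, Matrix.cons_val_two, Matrix.cons_val_three, Matrix.tail_cons]
  try ring

private lemma key_lemma (q r s t : ℝ) (hq : 0 ≤ q) (hr : 0 ≤ r) (hs : 0 ≤ s) (ht : 0 ≤ t)
    (hsum : q + r + s + t = 1) (hw : (r+s)^2 + 3*(r+s) ≤ 2) (hrs : r ≤ s) :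
    phi ![q,r,s,t] ≤ phi ![q,r+s,t] := by
  rw [phi4_eval, phi3_eval, ← sub_nonneg]
  rw [show q + (r+s) = q+r+s from by ring]
  by_cases hr0 : r = 0
  · subst hr0
    norm_num
    try ring_nf
  · have hrpos : 0 < r := lt_of_le_of_ne hr (Ne.symm hr0)
    have hspos : 0 < s := lt_of_lt_of_le hrpos hrs
    have hu1 : r + s < 1 := by nlinarith
    -- positivity facts
    have hqr : 0 < q + r := by linarith
    have hqu : 0 < q + r + s := by linarith
    have hst : 0 < s + t := by linarith
    have hut : 0 < r + s + t := by linarith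
    have h1u : 0 < 1 - (r+s) := by linarith
    have h1r : 0 < 1 - r := by linarith
    have h1s : 0 < 1 - s := by linarith
    -- bounds
    have hX1 := log_sub_log_ge1 (q+r+s) (q+r) hqr (by linarith)
    have hX2 := log_sub_log_ge1 (r+s+t) (s+t) hst (by linarith)
    have hT1 := log_sub_log_ge3 (1-s) (1-(r+s)) h1u (by linarith)
    have hT2 := log_sub_log_le4 1 (1-(r+s)) h1u (by linarith)
    have hT3 := log_sub_log_le2 1 (1-r) h1r (by linarith)
    rw [Real.log_one] at hT2 hT3
    -- multiplied versions
    have mX1 := mul_le_mul_of_nonneg_left hX1 hr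
    have mX2 := mul_le_mul_of_nonneg_left hX2 hs
    have mT1 := mul_le_mul_of_nonneg_left hT1 (by linarith : (0:ℝ) ≤ 1 - s)
    have mT2 := mul_le_mul_of_nonneg_left hT2 hr
    have mT3 := mul_le_mul_of_nonneg_left hT3 (by linarith : (0:ℝ) ≤ 1 - r)
    -- main rational inequality
    have hN := Nnn r s hr hrs hw
    have m1 : r*((2*(q+r+s)-2*(q+r))/((q+r+s)+(q+r))) = 2*(r*s)/((q+r+s)+(q+r)) := by
      ring
    have m2 : s*((2*(r+s+t)-2*(s+t))/((r+s+t)+(s+t))) = 2*(r*s)/((r+s+t)+(s+t)) := by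
      ring
    rw [m1] at mX1
    rw [m2] at mX2
    have hA : (0:ℝ) < (q+r+s)+(q+r) := by linarith
    have hB : (0:ℝ) < (r+s+t)+(s+t) := by linarith
    have hHM : 8*(r*s)/(2+(r+s)) ≤ 2*(r*s)/((q+r+s)+(q+r)) + 2*(r*s)/((r+s+t)+(s+t)) := by
      have hAB : 2+(r+s) = ((q+r+s)+(q+r)) + ((r+s+t)+(s+t)) := by linarith
      rw [hAB, div_add_div _ _ (ne_of_gt hA) (ne_of_gt hB),
        div_le_div_iff₀ (by linarith) (by positivity)]
      nlinarith [mul_nonneg (mul_nonneg hr hs) (sq_nonneg (((q+r+s)+(q+r)) - ((r+s+t)+(s+t))))]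
    have h3u : (0:ℝ) < 3-(r+s) := by linarith
    have hΔ : (0:ℝ) < (1-s)^2+4*(1-s)*(1-(r+s))+(1-(r+s))^2 := by positivity
    have step2 : 0 ≤ 8*(r*s)/(2+(r+s))
        + 2*((1-s)*((3*(1-s)^2-3*(1-(r+s))^2)/((1-s)^2+4*(1-s)*(1-(r+s))+(1-(r+s))^2)))
        - 2*(r*((1^2+4*1*(1-(r+s))-5*(1-(r+s))^2)/(4*1*(1-(r+s))+2*(1-(r+s))^2)))
        - 2*((1-r)*((1^2-(1-r)^2)/(2*1*(1-r)))) := by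
      have e : 8*(r*s)/(2+(r+s))
          + 2*((1-s)*((3*(1-s)^2-3*(1-(r+s))^2)/((1-s)^2+4*(1-s)*(1-(r+s))+(1-(r+s))^2)))
          - 2*(r*((1^2+4*1*(1-(r+s))-5*(1-(r+s))^2)/(4*1*(1-(r+s))+2*(1-(r+s))^2)))
          - 2*((1-r)*((1^2-(1-r)^2)/(2*1*(1-r))))
          = 2*r*(72*s - 312*s^2 + 486*s^3 - 324*s^4 + 78*s^5
      - 240*r*s + 744*r*s^2 - 744*r*s^3 + 234*r*s^4 + 6*r*s^5
      - 12*r^2 + 292*r^2*s - 546*r^2*s^2 + 239*r^2*s^3 + 24*r^2*s^4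
      + 16*r^3 - 129*r^3*s + 83*r^3*s^2 + 37*r^3*s^3
      - 3*r^4 - 5*r^4*s + 27*r^4*s^2
      - 5*r^5 + 9*r^5*s + r^6)
            / (2*(2+(r+s))*((1-s)^2+4*(1-s)*(1-(r+s))+(1-(r+s))^2)*(1-(r+s))*(3-(r+s))) := by
        field_simp
        ring
      rw [e]
      apply div_nonneg
      · nlinarith [mul_nonneg hr hN]
      · positivity
    set F1 : ℝ := 2*(r*s)/((q+r+s)+(q+r)) with hF1
    set F2 : ℝ := 2*(r*s)/((r+s+t)+(s+t)) with hF2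
    set F3 : ℝ := (3*(1-s)^2-3*(1-(r+s))^2)/((1-s)^2+4*(1-s)*(1-(r+s))+(1-(r+s))^2) with hF3
    set F4 : ℝ := (1^2+4*1*(1-(r+s))-5*(1-(r+s))^2)/(4*1*(1-(r+s))+2*(1-(r+s))^2) with hF4
    set F5 : ℝ := (1^2-(1-r)^2)/(2*1*(1-r)) with hF5
    set F6 : ℝ := 8*(r*s)/(2+(r+s)) with hF6
    linarith [mX1, mX2, mT1, mT2, mT3, hHM, step2]

private lemma phi4_rev (a b c d : ℝ) : phi ![a,b,c,d] = phi ![d,c,b,a] := by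
  rw [phi4_eval, phi4_eval]
  ring_nf

private lemma phi3_rev (a b c : ℝ) : phi ![a,b,c] = phi ![c,b,a] := by
  rw [phi3_eval, phi3_eval]
  ring_nf

theorem stmt_6 (q r s t : ℝ) (hq : 0 ≤ q) (hr : 0 ≤ r) (hs : 0 ≤ s) (ht : 0 ≤ t)
    (hsum : q + r + s + t = 1) (hrs : r + s ≤ (Real.sqrt 17 - 3) / 2) :
    phi ![q, r, s, t] ≤ phi ![q, r + s, t] := by
  have h17 : Real.sqrt 17 ^ 2 = 17 := Real.sq_sqrt (by norm_num)
  have hs17 : (4:ℝ) ≤ Real.sqrt 17 := by nlinarith [Real.sqrt_nonneg 17]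
  have hw : (r+s)^2 + 3*(r+s) ≤ 2 := by nlinarith [hrs, hr, hs]
  rcases le_total r s with hle | hle
  · exact key_lemma q r s t hq hr hs ht hsum hw hle
  · calc phi ![q,r,s,t] = phi ![t,s,r,q] := phi4_rev q r s t
      _ ≤ phi ![t, s+r, q] := key_lemma t s r q ht hs hr hq (by linarith)
            (by rw [show s+r = r+s from by ring]; exact hw) hle
      _ = phi ![q, s+r, t] := phi3_rev t (s+r) q
      _ = phi ![q, r+s, t] := by rw [show s+r = r+s from by ring]
end

section
/- Sampling-procedure probability formula: let P ∈ ℝ_{≥0}^{n×n} and π, σ ∈ S_n, and define ν_π(σ) = ∏_{i=1}^n P_{π(i), σ(π(i))} / (∑_{j=i}^n P_{π(i), σ(π(j))}) (assuming all denominators are positive). Then ∑_{σ ∈ S_n} ν_π(σ) = 1 when P has all positive entries. -/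
open Finset

lemma filter_succ_le_eq_map {n : ℕ} (i : Fin n) :
    Finset.univ.filter (fun j : Fin (n+1) => i.succ ≤ j) =
      (Finset.univ.filter (fun j : Fin n => i ≤ j)).map (Fin.succEmb n) := by
  ext j
  simp only [Finset.mem_filter, Finset.mem_univ, true_and, Finset.mem_map,
    Fin.succEmb, Function.Embedding.coeFn_mk]
  constructor
  · intro hj
    have hj0 : j ≠ 0 := by
      intro h
      rw [h] at hj
      exact absurd hj (by simp [Fin.le_def])
    obtain ⟨j', rfl⟩ := Fin.exists_succ_eq.mpr hj0
    exact ⟨j', Fin.succ_le_succ_iff.mp hj, rfl⟩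
  · rintro ⟨j', hj', rfl⟩
    exact Fin.succ_le_succ_iff.mpr hj'

set_option maxHeartbeats 2000000 in
lemma key_s19 : ∀ (n : ℕ) (Q : Fin n → Fin n → ℝ), (∀ i j, 0 < Q i j) →
    ∑ σ : Equiv.Perm (Fin n), ∏ i : Fin n,
      Q i (σ i) / (∑ j ∈ Finset.univ.filter (i ≤ ·), Q i (σ j)) = 1 := by
  intro n
  induction n with
  | zero =>
    intro Q h
    simp
  | succ n ih =>
    intro Q hQ
    rw [← Equiv.sum_comp (Equiv.Perm.decomposeFin.symm : _ ≃ Equiv.Perm (Fin (n+1)))]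
    rw [Fintype.sum_prod_type]
    have hden0 : ∀ σ : Equiv.Perm (Fin (n+1)),
        (∑ j ∈ Finset.univ.filter ((0 : Fin (n+1)) ≤ ·), Q 0 (σ j)) = ∑ c, Q 0 c := by
      intro σ
      rw [Finset.filter_true_of_mem (fun x _ => Fin.zero_le x)]
      exact Equiv.sum_comp σ (Q 0)
    have hstep : ∀ p : Fin (n+1), ∀ e : Equiv.Perm (Fin n),
        (∏ i : Fin (n+1),
          Q i ((Equiv.Perm.decomposeFin.symm (p, e)) i) /
            (∑ j ∈ Finset.univ.filter (i ≤ ·), Q i ((Equiv.Perm.decomposeFin.symm (p, e)) j)))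
        = (Q 0 p / ∑ c, Q 0 c) *
          ∏ i : Fin n,
            (fun i c => Q i.succ (Equiv.swap 0 p (Fin.succ c))) i (e i) /
              (∑ j ∈ Finset.univ.filter (i ≤ ·),
                (fun i c => Q i.succ (Equiv.swap 0 p (Fin.succ c))) i (e j)) := by
      intro p e
      rw [Fin.prod_univ_succ]
      congr 1
      · rw [hden0, Equiv.Perm.decomposeFin_symm_apply_zero]
      · refine Finset.prod_congr rfl fun i _ => ?_
        rw [Equiv.Perm.decomposeFin_symm_apply_succ, filter_succ_le_eq_map, Finset.sum_map]
        simp only [Fin.succEmb, Function.Embedding.coeFn_mk]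
        congr 1
        refine Finset.sum_congr rfl fun j _ => ?_
        rw [Equiv.Perm.decomposeFin_symm_apply_succ]
    calc ∑ p : Fin (n+1), ∑ e : Equiv.Perm (Fin n),
          (∏ i : Fin (n+1),
            Q i ((Equiv.Perm.decomposeFin.symm (p, e)) i) /
              (∑ j ∈ Finset.univ.filter (i ≤ ·), Q i ((Equiv.Perm.decomposeFin.symm (p, e)) j)))
        = ∑ p : Fin (n+1), (Q 0 p / ∑ c, Q 0 c) * 1 := by
          refine Finset.sum_congr rfl fun p _ => ?_
          rw [Finset.sum_congr rfl (fun e _ => hstep p e), ← Finset.mul_sum]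
          congr 1
          exact ih (fun i c => Q i.succ (Equiv.swap 0 p c.succ)) (fun i c => hQ _ _)
      _ = 1 := by
          simp only [mul_one]
          rw [← Finset.sum_div]
          exact div_self (ne_of_gt (Finset.sum_pos (fun c _ => hQ _ _) Finset.univ_nonempty))

theorem stmt_19 (n : ℕ) (P : Matrix (Fin n) (Fin n) ℝ)
    (hpos : ∀ i j, 0 < P i j) (π : Equiv.Perm (Fin n)) :
    ∑ σ : Equiv.Perm (Fin n),
      ∏ i : Fin n,
        P (π i) (σ (π i)) / (∑ j ∈ Finset.univ.filter (i ≤ ·), P (π i) (σ (π j))) = 1 := by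
  have := key_s19 n (fun i c => P (π i) c) (fun i c => hpos _ _)
  rw [← Equiv.sum_comp (Equiv.mulRight π) _ ] at this
  simpa using this
end
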